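/- Epsilon-net with attained limits: let σᵢ : S^{n−1} → (0,∞] be functions with sup_V σᵢ(V) → ∞, and for any subsequence define its ray-like set R_∞ ⊆ S^{n−1} as the set of V with sup_{Vⱼ → V} limsup σ_{iⱼ}(Vⱼ) = ∞. Then for every ε > 0 there exist a finite set {V¹, …, V^A} ⊂ S^{n−1}, a subsequence (i_j), and for each α a sequence V_j^α → V^α with lim_{j→∞} σ_{i_j}(V_j^α) = ∞, such that the ray-like set R_∞' of the subsequence (i_j) satisfies {V¹,…,V^A} ⊆ R_∞' and R_∞' ⊆ ∪_{α=1}^A B(V^α, ε). -/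

import Mathlib

open Filter Topology

/-- The ray-like set of the subsequence indexed by `φ`: directions `V` for which the
supremum over sequences `uⱼ → V` of `limsup σ_{φ(j)}(uⱼ)` is infinite. -/
noncomputable def rayLike {S : Type*} [TopologicalSpace S] (σ : ℕ → S → ENNReal)
    (φ : ℕ → ℕ) : Set S :=
  {V | (⨆ (u : ℕ → S) (_ : Tendsto u atTop (𝓝 V)),
      Filter.limsup (fun j => σ (φ j) (u j)) atTop) = ⊤}

/-- A witnessing sequence with actual limit `⊤` puts `V` in the ray-like set. -/
lemma witness_mem_rayLike {S : Type*} [TopologicalSpace S] {σ : ℕ → S → ENNReal}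
    {φ : ℕ → ℕ} {V : S} {u : ℕ → S} (hu : Tendsto u atTop (𝓝 V))
    (hσ : Tendsto (fun j => σ (φ j) (u j)) atTop (𝓝 ⊤)) : V ∈ rayLike σ φ := by
  have h1 : Filter.limsup (fun j => σ (φ j) (u j)) atTop = ⊤ := hσ.limsup_eq
  refine top_unique ?_
  rw [← h1]
  exact le_iSup₂ (f := fun (u : ℕ → S) (_ : Tendsto u atTop (𝓝 V)) =>
    Filter.limsup (fun j => σ (φ j) (u j)) atTop) u hu

/-- The ray-like set can only shrink along further subsequences. -/
lemma rayLike_comp_subset {S : Type*} [MetricSpace S] {σ : ℕ → S → ENNReal}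
    {φ ψ : ℕ → ℕ} (hψ : StrictMono ψ) : rayLike σ (φ ∘ ψ) ⊆ rayLike σ φ := by
  classical
  intro V hV
  refine top_unique ?_
  rw [show (⊤ : ENNReal) = _ from hV.symm]
  refine iSup₂_le fun u hu => ?_
  -- extend `u` (defined along the subsequence) to a full sequence converging to `V`
  set u' : ℕ → S := fun j => if h : ∃ m, ψ m = j then u h.choose else V with hu'def
  have hval : ∀ m, u' (ψ m) = u m := by
    intro m
    have h : ∃ m', ψ m' = ψ m := ⟨m, rfl⟩
    have : ψ h.choose = ψ m := h.choose_spec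
    simp only [u', dif_pos h, hψ.injective this]
  have hu' : Tendsto u' atTop (𝓝 V) := by
    rw [Metric.tendsto_atTop]
    intro δ hδ
    rcases Metric.tendsto_atTop.mp hu δ hδ with ⟨M, hM⟩
    refine ⟨ψ M, fun j hj => ?_⟩
    by_cases h : ∃ m, ψ m = j
    · have hch : ψ h.choose = j := h.choose_spec
      have hMle : M ≤ h.choose := by
        by_contra hc
        push_neg at hc
        have := hψ hc
        omega
      have := hM h.choose hMle
      simpa [u', dif_pos h, hch] using this
    · simpa [u', dif_neg h] using hδ
  calc Filter.limsup (fun m => σ ((φ ∘ ψ) m) (u m)) atTop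
      = Filter.limsup ((fun j => σ (φ j) (u' j)) ∘ ψ) atTop := by
        congr 1
        funext m
        simp [hval m]
    _ = Filter.limsup (fun j => σ (φ j) (u' j)) (Filter.map ψ atTop) :=
        Filter.limsup_comp _ _ _
    _ ≤ Filter.limsup (fun j => σ (φ j) (u' j)) atTop :=
        Filter.limsup_le_limsup_of_le hψ.tendsto_atTop
    _ ≤ ⨆ (w : ℕ → S) (_ : Tendsto w atTop (𝓝 V)),
          Filter.limsup (fun j => σ (φ j) (w j)) atTop :=
        le_iSup₂ (f := fun (w : ℕ → S) (_ : Tendsto w atTop (𝓝 V)) =>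
          Filter.limsup (fun j => σ (φ j) (w j)) atTop) u' hu'

/-- From membership in the ray-like set, extract a further subsequence along which the
limit `⊤` is actually attained by a sequence converging to `V`. -/
lemma exists_witness {S : Type*} [MetricSpace S] {σ : ℕ → S → ENNReal}
    {φ : ℕ → ℕ} {V : S} (hV : V ∈ rayLike σ φ) :
    ∃ ψ : ℕ → ℕ, StrictMono ψ ∧ ∃ u : ℕ → S,
      Tendsto u atTop (𝓝 V) ∧ Tendsto (fun j => σ (φ (ψ j)) (u j)) atTop (𝓝 ⊤) := by
  classical
  have hV' : (⨆ (u : ℕ → S) (_ : Tendsto u atTop (𝓝 V)),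
      Filter.limsup (fun j => σ (φ j) (u j)) atTop) = ⊤ := hV
  have step : ∀ m : ℕ, ∃ u : ℕ → S, Tendsto u atTop (𝓝 V) ∧
      (m : ENNReal) < Filter.limsup (fun j => σ (φ j) (u j)) atTop := by
    intro m
    have hm : (m : ENNReal) < ⨆ (u : ℕ → S) (_ : Tendsto u atTop (𝓝 V)),
        Filter.limsup (fun j => σ (φ j) (u j)) atTop := by
      rw [hV']; exact ENNReal.natCast_lt_top m
    obtain ⟨u, hu⟩ := lt_iSup_iff.mp hm
    obtain ⟨hu', hlt⟩ := lt_iSup_iff.mp hu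
    exact ⟨u, hu', hlt⟩
  choose u hu hlim using step
  have freq : ∀ m : ℕ, ∃ᶠ j in atTop, (m : ENNReal) < σ (φ j) (u m j) := fun m =>
    Filter.frequently_lt_of_lt_limsup (by isBoundedDefault) (hlim m)
  have main : ∀ m N : ℕ, ∃ j, N ≤ j ∧ (m : ENNReal) < σ (φ j) (u m j) ∧
      dist (u m j) V < 1 / (m + 1) := by
    intro m N
    have hpos : (0 : ℝ) < 1 / (m + 1) := by positivity
    rcases Metric.tendsto_atTop.mp (hu m) (1 / (m + 1)) hpos with ⟨M, hM⟩
    rcases (Filter.frequently_atTop.mp (freq m)) (max N M) with ⟨j, hj, hjσ⟩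
    exact ⟨j, le_trans (le_max_left _ _) hj, hjσ, hM j (le_trans (le_max_right _ _) hj)⟩
  choose F hF1 hF2 hF3 using main
  let g : ℕ → ℕ := fun m => Nat.rec (F 0 0) (fun m prev => F (m + 1) (prev + 1)) m
  have hgs : ∀ m, g (m + 1) = F (m + 1) (g m + 1) := fun m => rfl
  have hgmono : StrictMono g := strictMono_nat_of_lt_succ fun m => by
    have := hF1 (m + 1) (g m + 1)
    rw [hgs m]
    omega
  have hdist : ∀ m, dist (u m (g m)) V < 1 / (m + 1) := by
    intro m
    cases m with
    | zero => exact hF3 0 0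
    | succ m => rw [hgs m]; exact hF3 (m + 1) (g m + 1)
  have hgt : ∀ m : ℕ, (m : ENNReal) < σ (φ (g m)) (u m (g m)) := by
    intro m
    cases m with
    | zero => exact hF2 0 0
    | succ m => rw [hgs m]; exact hF2 (m + 1) (g m + 1)
  refine ⟨g, hgmono, fun m => u m (g m), ?_, ?_⟩
  · rw [Metric.tendsto_atTop]
    intro δ hδ
    obtain ⟨M, hM⟩ := exists_nat_one_div_lt hδ
    refine ⟨M, fun m hm => lt_of_lt_of_le (lt_of_lt_of_le (hdist m) ?_) hM.le⟩
    apply one_div_le_one_div_of_le (by positivity)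
    have : (M : ℝ) ≤ m := Nat.cast_le.mpr hm
    linarith
  · refine ENNReal.tendsto_nhds_top fun M => ?_
    filter_upwards [Filter.eventually_ge_atTop M] with m hm
    exact lt_of_le_of_lt (Nat.cast_le.mpr hm) (hgt m)

theorem stmt_7 (n : ℕ)
    (σ : ℕ → (Metric.sphere (0 : EuclideanSpace ℝ (Fin n)) 1) → ENNReal)
    (hsup : Tendsto (fun i => ⨆ V, σ i V) atTop (𝓝 ⊤))
    (ε : ℝ) (hε : 0 < ε) :
    ∃ (A : ℕ) (Vs : Fin A → Metric.sphere (0 : EuclideanSpace ℝ (Fin n)) 1)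
      (φ : ℕ → ℕ), StrictMono φ ∧
      (∀ a : Fin A, ∃ u : ℕ → Metric.sphere (0 : EuclideanSpace ℝ (Fin n)) 1,
        Tendsto u atTop (𝓝 (Vs a)) ∧ Tendsto (fun j => σ (φ j) (u j)) atTop (𝓝 ⊤)) ∧
      (∀ a : Fin A, Vs a ∈ rayLike σ φ) ∧
      rayLike σ φ ⊆ ⋃ a : Fin A, Metric.ball (Vs a) ε := by
  classical
  by_contra hcon
  -- iterative construction: for every k there are k pairwise ε-separated points, each
  -- with an attained witness along a common subsequence
  have key : ∀ k : ℕ, ∃ (Vs : Fin k → Metric.sphere (0 : EuclideanSpace ℝ (Fin n)) 1)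
      (φ : ℕ → ℕ), StrictMono φ ∧
      (∀ a : Fin k, ∃ u : ℕ → Metric.sphere (0 : EuclideanSpace ℝ (Fin n)) 1,
        Tendsto u atTop (𝓝 (Vs a)) ∧ Tendsto (fun j => σ (φ j) (u j)) atTop (𝓝 ⊤)) ∧
      (∀ a b : Fin k, a ≠ b → ε ≤ dist (Vs a) (Vs b)) := by
    intro k
    induction k with
    | zero => exact ⟨Fin.elim0, id, strictMono_id, fun a => a.elim0, fun a => a.elim0⟩
    | succ k ih =>
      obtain ⟨Vs, φ, hφ, hwit, hsep⟩ := ih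
      have hmem : ∀ a : Fin k, Vs a ∈ rayLike σ φ := fun a =>
        witness_mem_rayLike (hwit a).choose_spec.1 (hwit a).choose_spec.2
      have hncov : ¬ (rayLike σ φ ⊆ ⋃ a : Fin k, Metric.ball (Vs a) ε) := fun hcov =>
        hcon ⟨k, Vs, φ, hφ, hwit, hmem, hcov⟩
      obtain ⟨V, hVray, hVout⟩ := Set.not_subset.mp hncov
      have hVfar : ∀ a : Fin k, ε ≤ dist V (Vs a) := by
        intro a
        by_contra hc
        push_neg at hc
        exact hVout (Set.mem_iUnion.mpr ⟨a, Metric.mem_ball.mpr hc⟩)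
      obtain ⟨ψ, hψ, u, hu, hσu⟩ := exists_witness hVray
      refine ⟨Fin.snoc Vs V, φ ∘ ψ, hφ.comp hψ, ?_, ?_⟩
      · intro a
        refine Fin.lastCases ?_ (fun a => ?_) a
        · exact ⟨u, by simpa using hu, by simpa using hσu⟩
        · obtain ⟨w, hw, hwσ⟩ := hwit a
          refine ⟨w ∘ ψ, ?_, ?_⟩
          · simpa [Function.comp] using hw.comp hψ.tendsto_atTop
          · exact hwσ.comp hψ.tendsto_atTop
      · intro a b
        refine Fin.lastCases ?_ (fun a' => ?_) a
        · refine Fin.lastCases ?_ (fun b' => ?_) b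
          · intro h; exact absurd rfl h
          · intro _
            simp only [Fin.snoc_last, Fin.snoc_castSucc]
            exact hVfar b'
        · refine Fin.lastCases ?_ (fun b' => ?_) b
          · intro _
            simp only [Fin.snoc_last, Fin.snoc_castSucc]
            rw [dist_comm]
            exact hVfar a'
          · intro h
            simp only [Fin.snoc_castSucc]
            refine hsep a' b' fun e => h ?_
            rw [e]
  -- but ε-separated sets on the compact sphere are uniformly finite: contradiction
  have hTB : TotallyBounded (Metric.sphere (0 : EuclideanSpace ℝ (Fin n)) 1) :=
    (isCompact_sphere _ _).totallyBounded
  obtain ⟨t, htfin, htcov⟩ := Metric.totallyBounded_iff.mp hTB (ε / 2) (by linarith)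
  haveI := htfin.fintype
  obtain ⟨Vs, φ, hφ, hwit, hsep⟩ := key (Fintype.card t + 1)
  have hassign : ∀ a : Fin (Fintype.card t + 1), ∃ c : t, (Vs a : EuclideanSpace ℝ (Fin n))
      ∈ Metric.ball (c : EuclideanSpace ℝ (Fin n)) (ε / 2) := by
    intro a
    have := htcov (Vs a).2
    rw [Set.mem_iUnion₂] at this
    obtain ⟨c, hc, hmem⟩ := this
    exact ⟨⟨c, hc⟩, hmem⟩
  choose f hf using hassign
  have hinj : Function.Injective f := by
    intro a b hab
    by_contra hne
    have h1 := hf a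
    have h2 := hf b
    rw [hab] at h1
    have : dist (Vs a : EuclideanSpace ℝ (Fin n)) (Vs b) < ε := by
      have := dist_triangle (Vs a : EuclideanSpace ℝ (Fin n)) (f b : EuclideanSpace ℝ (Fin n)) (Vs b)
      rw [Metric.mem_ball] at h1 h2
      have hcomm : dist (f b : EuclideanSpace ℝ (Fin n)) (Vs b : EuclideanSpace ℝ (Fin n))
          = dist (Vs b : EuclideanSpace ℝ (Fin n)) (f b : EuclideanSpace ℝ (Fin n)) :=
        dist_comm _ _
      linarith
    have hdist : ε ≤ dist (Vs a) (Vs b) := hsep a b hne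
    rw [Subtype.dist_eq] at hdist
    linarith
  have := Fintype.card_le_of_injective f hinj
  simp at this
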